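/- arXiv:1510.08577 — 2 statements merged into one kernel-verified Lean document; each statement's English description precedes it below -/
import Mathlib

section
/- Under Assumptions A1 and A2, L_ε(0; ḡ_v) = f(x̄) and W(0; ḡ_v) = {0}. -/
open Set Filter Topology
open scoped RealInnerProductSpace

noncomputable section

variable {F : Type*} [NormedAddCommGroup F] [InnerProductSpace ℝ F]

/-- The Fréchet (regular) normal cone to a set `C` at `x`. -/
def frechetNormalCone (C : Set F) (x : F) : Set F :=
  {v | ∀ δ > (0:ℝ), ∃ r > (0:ℝ), ∀ x' ∈ C, ‖x' - x‖ < r → ⟪v, x' - x⟫ ≤ δ * ‖x' - x‖}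

/-- The limiting (Mordukhovich) normal cone to a set `C` at `x`. -/
def limitingNormalCone (C : Set F) (x : F) : Set F :=
  {v | ∃ xs : ℕ → F, ∃ vs : ℕ → F, (∀ k, xs k ∈ C) ∧ Tendsto xs atTop (𝓝 x) ∧
    (∀ k, vs k ∈ frechetNormalCone C (xs k)) ∧ Tendsto vs atTop (𝓝 v)}

/-- `C` is locally closed at `x`. -/
def LocallyClosedAt (C : Set F) (x : F) : Prop := ∃ U ∈ 𝓝 x, IsClosed (C ∩ U)

/-- Prox-regularity of the set `C` at `xb` for the normal vector `wb`,
with respect to `ε` and `ρ`. -/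
def ProxRegularSetAt (C : Set F) (xb wb : F) (ε ρ : ℝ) : Prop :=
  0 < ε ∧ 0 ≤ ρ ∧ LocallyClosedAt C xb ∧ xb ∈ C ∧ wb ∈ limitingNormalCone C xb ∧
    ∀ x w : F, ‖x - xb‖ < ε → w ∈ limitingNormalCone C x → ‖w - wb‖ < ε →
      ∀ x' ∈ C, ‖x' - xb‖ ≤ ε → ⟪w, x' - x⟫ ≤ ρ / 2 * ‖x' - x‖ ^ 2

/-- Clarke regularity of a set at a point: the set is locally closed there and every
limiting normal is a Fréchet (regular) normal. -/
def ClarkeRegularSetAt (C : Set F) (x : F) : Prop :=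
  LocallyClosedAt C x ∧ limitingNormalCone C x ⊆ frechetNormalCone C x

/-- The Fréchet subdifferential of `f : F → ℝ ∪ {±∞}` at `x`. -/
def frechetSubdiff (f : F → EReal) (x : F) : Set F :=
  {v | ∃ a : ℝ, f x = (a : EReal) ∧ ∀ δ > (0:ℝ), ∃ r > (0:ℝ), ∀ x' : F, ‖x' - x‖ < r →
    ((a + ⟪v, x' - x⟫ - δ * ‖x' - x‖ : ℝ) : EReal) ≤ f x'}

/-- The limiting subdifferential of `f` at `x` (with `f`-attentive convergence). -/
def limSubdiff (f : F → EReal) (x : F) : Set F :=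
  {v | ∃ xs : ℕ → F, ∃ vs : ℕ → F, Tendsto xs atTop (𝓝 x) ∧
    Tendsto (fun k => f (xs k)) atTop (𝓝 (f x)) ∧
    (∀ k, vs k ∈ frechetSubdiff f (xs k)) ∧ Tendsto vs atTop (𝓝 v)}

/-- The epigraph of `f`, viewed inside the `L²`-product `F ×₂ ℝ`. -/
def epiSet (f : F → EReal) : Set (WithLp 2 (F × ℝ)) :=
  {p | f (WithLp.equiv 2 (F × ℝ) p).1 ≤ ((WithLp.equiv 2 (F × ℝ) p).2 : EReal)}

/-- Prox-regularity of the function `f` at `xb` for the subgradient `vb`, with respect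
to `ε` and `ρ`. -/
def ProxRegularFnAt (f : F → EReal) (xb vb : F) (ε ρ : ℝ) : Prop :=
  0 < ε ∧ 0 ≤ ρ ∧ vb ∈ limSubdiff f xb ∧
  ∃ a : ℝ, f xb = (a : EReal) ∧ (∃ U ∈ 𝓝 xb, ∀ x ∈ U, LowerSemicontinuousAt f x) ∧
    ∀ (x x' v : F) (b : ℝ), f x = (b : EReal) → |b - a| < ε → ‖x - xb‖ < ε →
      v ∈ limSubdiff f x → ‖v - vb‖ < ε → ‖x' - xb‖ ≤ ε →
      ((b + ⟪v, x' - x⟫ - ρ / 2 * ‖x' - x‖ ^ 2 : ℝ) : EReal) ≤ f x'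

/-- `f` is properly prox-regular at `xb` w.r.t. `ε`, `ρ`: it is prox-regular there for every
limiting subgradient, and its epigraph is prox-regular at `(xb, f xb)` for every normal of
the form `(g, -1)`. -/
def ProperlyProxRegularAt (f : F → EReal) (xb : F) (ε ρ : ℝ) : Prop :=
  (∀ g ∈ limSubdiff f xb, ProxRegularFnAt f xb g ε ρ) ∧
  ∃ a : ℝ, f xb = (a : EReal) ∧
    ∀ g : F, (WithLp.equiv 2 (F × ℝ)).symm (g, -1) ∈
        limitingNormalCone (epiSet f) ((WithLp.equiv 2 (F × ℝ)).symm (xb, a)) →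
      ProxRegularSetAt (epiSet f) ((WithLp.equiv 2 (F × ℝ)).symm (xb, a))
        ((WithLp.equiv 2 (F × ℝ)).symm (g, -1)) ε ρ

/-- Assumption A1: `f` is proper, lower semicontinuous on the whole space, and properly
prox-regular at `xb` with respect to `eb` and `ρ`. -/
def AssumptionA1 (f : F → EReal) (xb : F) (eb ρ : ℝ) : Prop :=
  (∀ x, f x ≠ ⊥) ∧ (∃ x, f x ≠ ⊤) ∧ LowerSemicontinuous f ∧ ProperlyProxRegularAt f xb eb ρ

/-- `D_ε f`: the set of `g` such that `g + int B_V(0, ε) ⊆ ∂f(xb)`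
(the `ε`-relative interior of `∂f(xb)` when the UV-decomposition is used). -/
def DEps (f : F → EReal) (xb : F) (V : Submodule ℝ F) (ε : ℝ) : Set F :=
  {g | ∀ w ∈ V, ‖w‖ < ε → g + w ∈ limSubdiff f xb}

/-- Orthogonal projection onto a submodule, as a map into the ambient space. -/
def projV (V : Submodule ℝ F) [Submodule.HasOrthogonalProjection V] (x : F) : F :=
  (Submodule.orthogonalProjectionOnto V x : F)

/-- The U-Lagrangian `L_ε(u; gb_v)`. -/
def ULagrangian (f : F → EReal) (xb gb : F) (V : Submodule ℝ F) [Submodule.HasOrthogonalProjection V]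
    (ε : ℝ) (u : ↥(Vᗮ)) : EReal :=
  sInf ((fun v : F => f (xb + ↑u + v) - ((⟪projV V gb, v⟫ : ℝ) : EReal)) ''
    {v : F | v ∈ V ∧ ‖v‖ ≤ ε})

/-- The set `W(u; gb_v)` of minimizers defining the U-Lagrangian (with the convention
that the argmin is empty when the infimum is `+∞`). -/
def Wset (f : F → EReal) (xb gb : F) (V : Submodule ℝ F) [Submodule.HasOrthogonalProjection V]
    (ε : ℝ) (u : ↥(Vᗮ)) : Set ↥V :=
  {v : ↥V | ‖(v : F)‖ ≤ ε ∧
    f (xb + ↑u + ↑v) - ((⟪projV V gb, (v:F)⟫ : ℝ) : EReal) = ULagrangian f xb gb V ε u ∧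
    ULagrangian f xb gb V ε u ≠ ⊤}

/-- The function `h(u,v) = f(xb+u+v) - ⟪gb_v, v⟫ + δ_{B_V(0,ε)}(v)` on `U ×₂ V`. -/
def hFun (f : F → EReal) (xb gb : F) (V : Submodule ℝ F) [Submodule.HasOrthogonalProjection V] (ε : ℝ)
    (p : WithLp 2 (↥(Vᗮ) × ↥V)) : EReal :=
  f (xb + ↑(WithLp.equiv 2 (↥(Vᗮ) × ↥V) p).1 + ↑(WithLp.equiv 2 (↥(Vᗮ) × ↥V) p).2)
    - ((⟪projV V gb, ((WithLp.equiv 2 (↥(Vᗮ) × ↥V) p).2 : F)⟫ : ℝ) : EReal)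
    + (if ‖((WithLp.equiv 2 (↥(Vᗮ) × ↥V) p).2 : F)‖ ≤ ε then (0 : EReal) else ⊤)

/-- `g` is a proximal subgradient of `φ` at `xb`. -/
def IsProximalSubgradient (φ : F → EReal) (xb g : F) : Prop :=
  ∃ a : ℝ, φ xb = (a : EReal) ∧ ∃ ε > (0:ℝ), ∃ ρ > (0:ℝ), ∀ x : F, ‖x - xb‖ ≤ ε →
    ((a + ⟪g, x - xb⟫ - ρ / 2 * ‖x - xb‖ ^ 2 : ℝ) : EReal) ≤ φ x

/-- The localized tilted argmin mapping used in the definition of tilt stability. -/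
def tiltArgmin (φ : F → EReal) (xb : F) (a δ : ℝ) (g : F) : Set F :=
  {x | ‖x - xb‖ ≤ δ ∧ ∀ y : F, ‖y - xb‖ ≤ δ →
    φ x - ((a + ⟪g, x - xb⟫ : ℝ) : EReal) ≤ φ y - ((a + ⟪g, y - xb⟫ : ℝ) : EReal)}

/-- `xb` gives a tilt-stable local minimum of `φ`. -/
def TiltStableLocalMin (φ : F → EReal) (xb : F) : Prop :=
  ∃ a : ℝ, φ xb = (a : EReal) ∧ ∃ δ > (0:ℝ), ∃ M : F → F, ∃ η > (0:ℝ), ∃ L : ℝ,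
    M 0 = xb ∧ (∀ g g' : F, ‖g‖ < η → ‖g'‖ < η → ‖M g - M g'‖ ≤ L * ‖g - g'‖) ∧
    ∀ g : F, ‖g‖ < η → tiltArgmin φ xb a δ g = {M g}

/-- Strict differentiability (with gradient vector `A`) of an extended-real-valued
function at `xb`. -/
def StrictDiffAt (φ : F → EReal) (xb A : F) : Prop :=
  (∃ a : ℝ, φ xb = (a : EReal)) ∧ ∀ δ > (0:ℝ), ∃ r > (0:ℝ), ∀ x x' : F,
    ‖x - xb‖ < r → ‖x' - xb‖ < r →
    ∃ a b : ℝ, φ x = (a : EReal) ∧ φ x' = (b : EReal) ∧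
      |b - a - ⟪A, x' - x⟫| ≤ δ * ‖x' - x‖

/-- `φ` is subdifferentially continuous at `xb` (for every subgradient there). -/
def SubdiffContinuousAt (φ : F → EReal) (xb : F) : Prop :=
  ∀ vb ∈ limSubdiff φ xb, ∀ xs : ℕ → F, ∀ vs : ℕ → F, Tendsto xs atTop (𝓝 xb) →
    (∀ k, vs k ∈ limSubdiff φ (xs k)) → Tendsto vs atTop (𝓝 vb) →
    Tendsto (fun k => φ (xs k)) atTop (𝓝 (φ xb))

/-- Strong metric regularity of the subdifferential map `∂φ` at `(xb, yb)`: the inverse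
admits a Lipschitz single-valued localization around `(yb, xb)`. -/
def StronglyMetricallyRegularSubdiffAt (φ : F → EReal) (xb yb : F) : Prop :=
  yb ∈ limSubdiff φ xb ∧ ∃ a > (0:ℝ), ∃ b > (0:ℝ), ∃ L : ℝ, ∃ s : F → F,
    (∀ g g' : F, ‖g - yb‖ < a → ‖g' - yb‖ < a → ‖s g - s g'‖ ≤ L * ‖g - g'‖) ∧
    ∀ g : F, ‖g - yb‖ < a → ‖s g - xb‖ < b ∧
      ∀ x : F, ‖x - xb‖ < b → (g ∈ limSubdiff φ x ↔ x = s g)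

/-- `f` is subdifferentially regular at `x`: `f x` is finite and the epigraph is Clarke
regular at `(x, f x)`. -/
def SubdiffRegularAt (f : F → EReal) (x : F) : Prop :=
  ∃ a : ℝ, f x = (a : EReal) ∧
    ClarkeRegularSetAt (epiSet f) ((WithLp.equiv 2 (F × ℝ)).symm (x, a))

/-- `M` is (around `yb`) a `C^k`-smooth manifold: locally the common zero set of finitely
many `C^k` functions with linearly independent gradients at `yb`. -/
def IsManifoldAround [CompleteSpace F] (M : Set F) (yb : F) (k : WithTop ℕ∞) : Prop :=
  ∃ m : ℕ, ∃ Q : Set F, ∃ φ : Fin m → F → ℝ, IsOpen Q ∧ yb ∈ Q ∧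
    (∀ i, ContDiff ℝ k (φ i)) ∧ (M ∩ Q = {y ∈ Q | ∀ i, φ i y = 0}) ∧
    LinearIndependent ℝ fun i => gradient (φ i) yb

/-- Continuity (inner- and outer-semicontinuity) of `∂f` at `xb` relative to `M`. -/
def SubdiffContinuousRelAt (f : F → EReal) (M : Set F) (xb : F) : Prop :=
  (∀ g ∈ limSubdiff f xb, ∀ xs : ℕ → F, (∀ k, xs k ∈ M) → Tendsto xs atTop (𝓝 xb) →
      ∃ gs : ℕ → F, (∀ k, gs k ∈ limSubdiff f (xs k)) ∧ Tendsto gs atTop (𝓝 g)) ∧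
  (∀ g : F, ∀ xs : ℕ → F, ∀ gs : ℕ → F, (∀ k, xs k ∈ M) → Tendsto xs atTop (𝓝 xb) →
      (∀ k, gs k ∈ limSubdiff f (xs k)) → Tendsto gs atTop (𝓝 g) → g ∈ limSubdiff f xb)

/-- `f` is `C^k`-partly smooth at `xb` relative to `M`, with `V`-space `V`. -/
def PartlySmoothAt [CompleteSpace F] (f : F → EReal) (xb : F) (M : Set F)
    (V : Submodule ℝ F) (k : WithTop ℕ∞) : Prop :=
  IsManifoldAround M xb k ∧ xb ∈ M ∧
  (∃ N : Set F, IsOpen N ∧ xb ∈ N ∧ ∃ g : F → ℝ, ContDiff ℝ k g ∧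
      ∀ y ∈ M ∩ N, f y = ((g y : ℝ) : EReal)) ∧
  (∃ δ > (0:ℝ), ∀ y ∈ M, ‖y - xb‖ < δ → SubdiffRegularAt f y ∧ (limSubdiff f y).Nonempty) ∧
  limitingNormalCone M xb = (V : Set F) ∧
  SubdiffContinuousRelAt f M xb

/-- The subderivative `df(xb)(w)`. -/
def subderiv (f : F → EReal) (xb : F) (w : F) : EReal :=
  liminf (fun p : ℝ × F => (((p.1)⁻¹ : ℝ) : EReal) * (f (xb + p.1 • p.2) - f xb))
    ((𝓝[>] (0:ℝ)) ×ˢ 𝓝 w)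

/-- The normal cone to a convex set `C` at `x` in the sense of convex analysis. -/
def convexNormalCone (C : Set F) (x : F) : Set F :=
  {w | ∀ y ∈ C, ⟪w, y - x⟫ ≤ 0}


section Work
variable {n : ℕ} (f : EuclideanSpace ℝ (Fin n) → EReal) (xb : EuclideanSpace ℝ (Fin n)) (eb ρ ε : ℝ)
    (V : Submodule ℝ (EuclideanSpace ℝ (Fin n))) (gb : EuclideanSpace ℝ (Fin n))

theorem ULagrangian_key (hε : 0 < ε) (hgb : gb ∈ DEps f xb V ε)
    (hprx : ∀ g ∈ limSubdiff f xb, ProxRegularFnAt f xb g eb ρ)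
    (hρ0 : 0 < ρ) (hρ2 : ρ < 2) (heb : ε < eb)
    (a : ℝ) (ha : f xb = (a : EReal)) :
    ∀ v : EuclideanSpace ℝ (Fin n), v ∈ V → ‖v‖ ≤ ε → v ≠ 0 →
      (a : EReal) < f (xb + v) - ((⟪projV V gb, v⟫ : ℝ) : EReal) := by
  intro v hvV hvε hv0
  have hvn : 0 < ‖v‖ := norm_pos_iff.mpr hv0
  set t : ℝ := ε * (ρ + 2) / 4 with ht
  have ht0 : 0 < t := by positivity
  have htε : t < ε := by nlinarith
  set w : EuclideanSpace ℝ (Fin n) := (t * ‖v‖⁻¹) • v with hw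
  have hwV : w ∈ V := V.smul_mem _ hvV
  have hwn : ‖w‖ = t := by
    rw [hw, norm_smul]
    rw [Real.norm_eq_abs, abs_of_pos (by positivity)]
    field_simp
  have hg : gb + w ∈ limSubdiff f xb := hgb w hwV (by rw [hwn]; exact htε)
  obtain ⟨heb0, -, -, a', ha', -, hineq⟩ := hprx _ hg
  have haa : a' = a := EReal.coe_injective (ha'.symm.trans ha)
  subst haa
  have h1 := hineq xb (xb + v) (gb + w) a' ha' (by simpa using heb0)
      (by simpa using heb0) hg (by simpa using heb0)
      (by simpa using hvε.trans heb.le)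
  rw [add_sub_cancel_left] at h1
  have hinnw : ⟪w, v⟫ = t * ‖v‖ := by
    rw [hw, real_inner_smul_left, real_inner_self_eq_norm_sq]
    field_simp
  have horth : ⟪gb - projV V gb, v⟫ = 0 :=
    Submodule.starProjection_inner_eq_zero gb v hvV
  have hinn : ⟪gb + w, v⟫ = ⟪projV V gb, v⟫ + t * ‖v‖ := by
    rw [inner_add_left, ← hinnw]
    have := horth
    rw [inner_sub_left] at this
    linarith
  have h2 : ((a' + ⟪gb + w, v⟫ - ρ / 2 * ‖v‖ ^ 2 - ⟪projV V gb, v⟫ : ℝ) : EReal)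
      ≤ f (xb + v) - ((⟪projV V gb, v⟫ : ℝ) : EReal) := by
    rw [EReal.coe_sub]
    exact EReal.sub_le_sub h1 le_rfl
  refine lt_of_lt_of_le ?_ h2
  rw [EReal.coe_lt_coe_iff]
  rw [hinn]
  have h3 : ρ / 2 * ‖v‖ ^ 2 < t * ‖v‖ := by
    have e0 : ‖v‖ * ‖v‖ ≤ ε * ‖v‖ := mul_le_mul_of_nonneg_right hvε hvn.le
    have e1 := mul_le_mul_of_nonneg_left e0 (by positivity : (0:ℝ) ≤ ρ / 2)
    have e2 : ρ / 2 * (ε * ‖v‖) < t * ‖v‖ := by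
      rw [ht]; nlinarith
    rw [pow_two]; nlinarith
  linarith

end Work

/-- Under Assumptions A1 and A2, `L_ε(0; gb_v) = f(xb)` and `W(0; gb_v) = {0}`. -/
theorem ULagrangian_at_zero {n : ℕ} (f : EuclideanSpace ℝ (Fin n) → EReal) (xb : EuclideanSpace ℝ (Fin n)) (eb ρ ε : ℝ) (hε : 0 < ε)
    (V : Submodule ℝ (EuclideanSpace ℝ (Fin n))) (gb : EuclideanSpace ℝ (Fin n)) (hgb : gb ∈ DEps f xb V ε)
    (hA1 : AssumptionA1 f xb eb ρ)
    (hA2 : 0 < ρ ∧ ρ < 2 ∧ ε < eb) :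
    ULagrangian f xb gb V ε 0 = f xb ∧ Wset f xb gb V ε 0 = {(0 : ↥V)} := by
  obtain ⟨hρ0, hρ2, heb⟩ := hA2
  obtain ⟨hbot, -, -, hprx, a, ha, -⟩ := hA1
  have key := ULagrangian_key f xb eb ρ ε V gb hε hgb hprx hρ0 hρ2 heb a ha
  have hval0 : f (xb + ↑(0 : ↥(Vᗮ)) + (0 : EuclideanSpace ℝ (Fin n)))
      - ((⟪projV V gb, (0 : EuclideanSpace ℝ (Fin n))⟫ : ℝ) : EReal) = (a : EReal) := by
    simp [ha]
  have hL : ULagrangian f xb gb V ε 0 = (a : EReal) := by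
    unfold ULagrangian
    apply le_antisymm
    · exact sInf_le ⟨0, ⟨V.zero_mem, by simpa using hε.le⟩, hval0⟩
    · apply le_sInf
      rintro x ⟨v, ⟨hvV, hvn⟩, rfl⟩
      rcases eq_or_ne v 0 with rfl | hv0
      · exact hval0.ge
      · have := (key v hvV hvn hv0).le
        simpa using this
  constructor
  · rw [hL, ha]
  · ext v
    simp only [Wset, Set.mem_setOf_eq, Set.mem_singleton_iff, hL]
    constructor
    · rintro ⟨hn, heq, -⟩
      by_contra hne
      have hv0 : (v : EuclideanSpace ℝ (Fin n)) ≠ 0 := by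
        simpa [Submodule.coe_eq_zero] using hne
      have hkey := key (v : EuclideanSpace ℝ (Fin n)) v.2 hn hv0
      rw [show xb + ↑(0 : ↥(Vᗮ)) + (v : EuclideanSpace ℝ (Fin n))
        = xb + (v : EuclideanSpace ℝ (Fin n)) by simp] at heq
      rw [heq] at hkey
      exact lt_irrefl _ hkey
    · rintro rfl
      exact ⟨by simpa using hε.le, by simpa using hval0, by simp⟩


end
end

section
/- Suppose Assumptions A1 and A2 hold and the UV-decomposition is used. Then the limiting subdifferential of the U-Lagrangian at 0 is a singleton: ∂L_ε(0; ḡ_v) = {ḡ_u}. -/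
open Set Filter Topology
open scoped RealInnerProductSpace

noncomputable section

variable {F : Type*} [NormedAddCommGroup F] [InnerProductSpace ℝ F]

/-! ### Auxiliary lemmas -/

lemma myProjNormLe (S : Submodule ℝ F) [Submodule.HasOrthogonalProjection S] (x : F) :
    ‖(Submodule.orthogonalProjectionOnto S x : F)‖ ≤ ‖x‖ := by
  have h := Submodule.norm_sq_eq_add_norm_sq_projection x S
  have h1 : (0:ℝ) ≤ ‖x‖ := norm_nonneg _
  have h2 : (0:ℝ) ≤ ‖(Submodule.orthogonalProjectionOnto S x : F)‖ := norm_nonneg _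
  have h3 : (0:ℝ) ≤ ‖(Submodule.orthogonalProjectionOnto Sᗮ x : F)‖ := norm_nonneg _
  simp only [Submodule.norm_coe] at *
  nlinarith [h, h1, h2, h3]

lemma myInnerOrth {V : Submodule ℝ F} {u v : F} (hu : u ∈ Vᗮ) (hv : v ∈ V) : ⟪u, v⟫ = 0 := by
  have := (Submodule.mem_orthogonal V u).1 hu v hv
  rwa [real_inner_comm] at this

lemma myInnerProj {V : Submodule ℝ F} [Submodule.HasOrthogonalProjection V] (g : F) {v : F} (hv : v ∈ V) :
    ⟪g, v⟫ = ⟪(Submodule.orthogonalProjectionOnto V g : F), v⟫ := by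
  have h0 : ⟪g - (Submodule.orthogonalProjectionOnto V g : F), v⟫ = 0 :=
    myInnerOrth (Submodule.sub_starProjection_mem_orthogonal (K := V) g) hv
  rw [inner_sub_left] at h0
  linarith

lemma myErealLeSub {x : EReal} {s r : ℝ} (h : ((s + r : ℝ) : EReal) ≤ x) :
    ((s : ℝ) : EReal) ≤ x - (r : EReal) := by
  rw [EReal.le_sub_iff_add_le (Or.inl (EReal.coe_ne_bot r)) (Or.inl (EReal.coe_ne_top r))]
  exact_mod_cast h

lemma myErealSubLe {x : EReal} {s r : ℝ} (h : ((s : ℝ) : EReal) ≤ x - (r : EReal)) :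
    ((s + r : ℝ) : EReal) ≤ x := by
  rw [EReal.le_sub_iff_add_le (Or.inl (EReal.coe_ne_bot r)) (Or.inl (EReal.coe_ne_top r))] at h
  exact_mod_cast h

lemma myErealSubEq {x : EReal} {b r : ℝ} (h : x - (r : EReal) = ((b : ℝ) : EReal)) :
    x = ((b + r : ℝ) : EReal) := by
  induction x with
  | bot => simp [EReal.bot_sub] at h
  | coe y =>
      rw [← EReal.coe_sub, EReal.coe_eq_coe_iff] at h
      rw [EReal.coe_eq_coe_iff]; linarith
  | top => rw [EReal.top_sub_coe] at h; exact absurd h.symm (EReal.coe_ne_top b)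

lemma myExistsMin (φf : F → EReal) (hφ : LowerSemicontinuous φf) (ψ : F → ℝ) (hψ : Continuous ψ)
    {K : Set F} (hK : IsCompact K) (hne : K.Nonempty) :
    ∃ v ∈ K, φf v - ((ψ v : ℝ) : EReal) = sInf ((fun v => φf v - ((ψ v : ℝ) : EReal)) '' K) := by
  set Φ : F → EReal := fun v => φf v - ((ψ v : ℝ) : EReal) with hΦ
  obtain ⟨sq, -, hsqt, hsqm⟩ :=
    exists_seq_tendsto_sInf (S := Φ '' K) (hne.image Φ) (OrderBot.bddBelow _)
  have hch : ∀ j, ∃ v, v ∈ K ∧ Φ v = sq j := fun j => by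
    obtain ⟨v, hvK, hv⟩ := hsqm j; exact ⟨v, hvK, hv⟩
  choose vv hvK hvE using hch
  obtain ⟨vb, hvbK, ψi, hψmono, hvt⟩ := hK.tendsto_subseq hvK
  refine ⟨vb, hvbK, le_antisymm ?_ (sInf_le ⟨vb, hvbK, rfl⟩)⟩
  by_contra hcon
  push_neg at hcon
  obtain ⟨q, hq1, hq2⟩ := EReal.exists_rat_btwn_of_lt hcon
  obtain ⟨s, hs1, hs2⟩ := EReal.exists_rat_btwn_of_lt hq2
  have hsq : (q : ℝ) < (s : ℝ) := by exact_mod_cast hs1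
  have htΦ : Tendsto (fun i => Φ (vv (ψi i))) atTop (𝓝 (sInf (Φ '' K))) := by
    have h : (fun i => Φ (vv (ψi i))) = (fun i => sq (ψi i)) := by
      funext i; exact hvE (ψi i)
    rw [h]
    exact hsqt.comp hψmono.tendsto_atTop
  have E1 : ∀ᶠ i in atTop, Φ (vv (ψi i)) < ((q : ℝ) : EReal) := htΦ.eventually_lt_const hq1
  have hlt : (((s : ℝ) + ψ vb : ℝ) : EReal) < φf vb := by
    rw [EReal.coe_add]
    exact (EReal.lt_sub_iff_add_lt (Or.inl (EReal.coe_ne_bot _))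
      (Or.inl (EReal.coe_ne_top _))).1 hs2
  have E2 : ∀ᶠ i in atTop, (((s : ℝ) + ψ vb : ℝ) : EReal) < φf (vv (ψi i)) :=
    hvt.eventually (hφ vb _ hlt)
  have E3 : ∀ᶠ i in atTop, ψ (vv (ψi i)) < ψ vb + ((s : ℝ) - (q : ℝ)) := by
    have h : Tendsto (fun i => ψ (vv (ψi i))) atTop (𝓝 (ψ vb)) :=
      (hψ.tendsto vb).comp hvt
    exact h.eventually_lt_const (by linarith)
  obtain ⟨i, h1, h2, h3⟩ := (E1.and (E2.and E3)).exists
  have h4 : φf (vv (ψi i)) < (((q : ℝ) + ψ (vv (ψi i)) : ℝ) : EReal) := by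
    rw [EReal.coe_add]
    exact (EReal.sub_lt_iff (Or.inl (EReal.coe_ne_bot _)) (Or.inl (EReal.coe_ne_top _))).1 h1
  have h5 : ((s : ℝ) + ψ vb : ℝ) < ((q : ℝ) + ψ (vv (ψi i)) : ℝ) := by
    exact_mod_cast h2.trans h4
  linarith

set_option maxHeartbeats 2000000 in
/-- With the UV-decomposition, under Assumptions A1 and A2,
`∂L_ε(0; gb_v) = {gb_u}`. -/
theorem ULagrangian_subdiff_singleton {n : ℕ} (f : EuclideanSpace ℝ (Fin n) → EReal) (xb : EuclideanSpace ℝ (Fin n)) (eb ρ ε : ℝ) (hε : 0 < ε)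
    (hA1 : AssumptionA1 f xb eb ρ) (gt : EuclideanSpace ℝ (Fin n)) (hgt : gt ∈ limSubdiff f xb)
    (V : Submodule ℝ (EuclideanSpace ℝ (Fin n)))
    (hV : V = Submodule.span ℝ ((fun g => g - gt) '' limSubdiff f xb))
    (hne : (DEps f xb V ε).Nonempty)
    (gb : EuclideanSpace ℝ (Fin n)) (hgb : gb ∈ DEps f xb V ε)
    (hA2 : 0 < ρ ∧ ρ < 2 ∧ ε < eb) :
    limSubdiff (ULagrangian f xb gb V ε) 0 = {Submodule.orthogonalProjectionOnto (Vᗮ) gb} := by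
  classical
  obtain ⟨hρ, hρ2, hεeb⟩ := hA2
  obtain ⟨hfbot, -, hlsc, hppr⟩ := hA1
  have hgbmem : gb ∈ limSubdiff f xb := by
    simpa using hgb 0 (zero_mem V) (by simpa using hε)
  obtain ⟨hprall, -, -, -⟩ := hppr
  obtain ⟨heb, -, -, a, hfa, -, hprox⟩ := hprall gb hgbmem
  -- constants
  set c : ℝ := ε * (2 - ρ) / 4 with hc_def
  set t : ℝ := ε * (2 + ρ) / 4 with ht_def
  have hc : 0 < c := by rw [hc_def]; nlinarith
  have ht : 0 < t := by rw [ht_def]; nlinarith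
  have htε : t < ε := by rw [ht_def]; nlinarith
  -- the basic prox inequality
  have hkey : ∀ w ∈ V, ‖w‖ < ε → ∀ x' : (EuclideanSpace ℝ (Fin n)), ‖x' - xb‖ ≤ eb →
      ((a + ⟪gb + w, x' - xb⟫ - ρ / 2 * ‖x' - xb‖ ^ 2 : ℝ) : EReal) ≤ f x' := by
    intro w hw hwε x' hx'
    exact hprox xb x' (gb + w) a hfa (by simpa using heb) (by simpa using heb)
      (hgb w hw hwε) (by simpa using hwε.trans hεeb) hx'
  -- master lower bound
  have hLB : ∀ u v : (EuclideanSpace ℝ (Fin n)), u ∈ Vᗮ → v ∈ V → ‖v‖ ≤ ε → ‖u‖ ^ 2 + ε ^ 2 ≤ eb ^ 2 →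
      ((a + ⟪gb, u⟫ + ⟪projV V gb, v⟫ + c * ‖v‖ - ρ / 2 * ‖u‖ ^ 2 : ℝ) : EReal)
        ≤ f (xb + u + v) := by
    intro u v hu hv hvε hube
    have hxx : (xb + u + v) - xb = u + v := by abel
    have huv : ⟪u, v⟫ = 0 := myInnerOrth hu hv
    have hnuv : ‖u + v‖ ^ 2 = ‖u‖ ^ 2 + ‖v‖ ^ 2 := by
      rw [norm_add_sq_real, huv]; ring
    have hebpos : (0:ℝ) < eb := hε.trans hεeb
    have hle_eb : ‖u + v‖ ≤ eb := by nlinarith [norm_nonneg (u + v), norm_nonneg v]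
    have hPv : ⟪gb, v⟫ = ⟪projV V gb, v⟫ := myInnerProj gb hv
    by_cases hv0 : v = 0
    · subst hv0
      have h0 := hkey 0 (zero_mem V) (by simpa using hε) (xb + u + 0) (by rw [hxx]; exact hle_eb)
      refine le_trans (EReal.coe_le_coe_iff.2 ?_) h0
      rw [hxx]
      simp only [add_zero, inner_zero_right, norm_zero]
      nlinarith [real_inner_self_nonneg (x := (0:(EuclideanSpace ℝ (Fin n))))]
    · set w : (EuclideanSpace ℝ (Fin n)) := (t / ‖v‖) • v with hw_def
      have hnv : (0:ℝ) < ‖v‖ := norm_pos_iff.2 hv0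
      have hwV : w ∈ V := V.smul_mem _ hv
      have hwnorm : ‖w‖ = t := by
        rw [hw_def, norm_smul, Real.norm_eq_abs, abs_of_pos (div_pos ht hnv)]
        field_simp
      have h0 := hkey w hwV (by rw [hwnorm]; exact htε) (xb + u + v) (by rw [hxx]; exact hle_eb)
      refine le_trans (EReal.coe_le_coe_iff.2 ?_) h0
      rw [hxx]
      have e1 : ⟪gb + w, u + v⟫ = ⟪gb, u⟫ + ⟪projV V gb, v⟫ + ⟪w, u⟫ + ⟪w, v⟫ := by
        rw [inner_add_left, inner_add_right, inner_add_right, hPv]; ring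
      have e2 : ⟪w, u⟫ = (0:ℝ) := by
        rw [hw_def, real_inner_smul_left]
        rw [real_inner_comm] at huv
        rw [huv]; ring
      have e3 : ⟪w, v⟫ = t * ‖v‖ := by
        rw [hw_def, real_inner_smul_left, real_inner_self_eq_norm_sq]
        field_simp
      rw [e1, e2, e3, hnuv]
      have hcle : c * ‖v‖ + ρ / 2 * ‖v‖ ^ 2 ≤ t * ‖v‖ := by
        rw [hc_def, ht_def]
        nlinarith [mul_le_mul_of_nonneg_left hvε (norm_nonneg v), hρ.le, norm_nonneg v]
      linarith
  -- lower bound for the function inside the infimum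
  have hLBφ : ∀ u v : (EuclideanSpace ℝ (Fin n)), u ∈ Vᗮ → v ∈ V → ‖v‖ ≤ ε → ‖u‖ ^ 2 + ε ^ 2 ≤ eb ^ 2 →
      ((a + ⟪gb, u⟫ + c * ‖v‖ - ρ / 2 * ‖u‖ ^ 2 : ℝ) : EReal)
        ≤ f (xb + u + v) - ((⟪projV V gb, v⟫ : ℝ) : EReal) := by
    intro u v hu hv hvε hube
    apply myErealLeSub
    have h0 := hLB u v hu hv hvε hube
    refine le_trans (EReal.coe_le_coe_iff.2 (le_of_eq ?_)) h0
    ring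
  -- lower bound for the U-Lagrangian
  have hLB_L : ∀ u : ↥(Vᗮ), ‖(u : (EuclideanSpace ℝ (Fin n)))‖ ^ 2 + ε ^ 2 ≤ eb ^ 2 →
      ((a + ⟪gb, (u : (EuclideanSpace ℝ (Fin n)))⟫ - ρ / 2 * ‖(u : (EuclideanSpace ℝ (Fin n)))‖ ^ 2 : ℝ) : EReal) ≤ ULagrangian f xb gb V ε u := by
    intro u hu
    apply le_sInf
    rintro x ⟨v, ⟨hvV, hvε⟩, rfl⟩
    refine le_trans (EReal.coe_le_coe_iff.2 ?_) (hLBφ (u : (EuclideanSpace ℝ (Fin n))) v u.2 hvV hvε hu)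
    nlinarith [norm_nonneg v]
  have hεeb2 : ε ^ 2 ≤ eb ^ 2 := by nlinarith
  -- the value at 0
  have hL0 : ULagrangian f xb gb V ε 0 = (a : EReal) := by
    refine le_antisymm ?_ ?_
    · have hmem : f (xb + ((0 : ↥(Vᗮ)) : (EuclideanSpace ℝ (Fin n))) + 0) - ((⟪projV V gb, (0:(EuclideanSpace ℝ (Fin n)))⟫ : ℝ) : EReal)
          ∈ (fun v : (EuclideanSpace ℝ (Fin n)) => f (xb + ((0 : ↥(Vᗮ)) : (EuclideanSpace ℝ (Fin n))) + v) - ((⟪projV V gb, v⟫ : ℝ) : EReal)) ''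
            {v : (EuclideanSpace ℝ (Fin n)) | v ∈ V ∧ ‖v‖ ≤ ε} := ⟨0, ⟨zero_mem V, by simp [hε.le]⟩, rfl⟩
      refine le_trans (sInf_le hmem) ?_
      simp [hfa]
    · have h0 := hLB_L 0 (by simpa using hεeb2)
      refine le_trans (EReal.coe_le_coe_iff.2 ?_) h0
      simp
  have hεeb2' : (0:ℝ) < eb ^ 2 - ε ^ 2 := by nlinarith
  -- membership of the projected gradient
  have hgbu_mem : (Submodule.orthogonalProjectionOnto (Vᗮ) gb) ∈ limSubdiff (ULagrangian f xb gb V ε) 0 := by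
    refine ⟨fun _ => 0, fun _ => Submodule.orthogonalProjectionOnto (Vᗮ) gb, tendsto_const_nhds,
      tendsto_const_nhds, fun k => ?_, tendsto_const_nhds⟩
    refine ⟨a, hL0, ?_⟩
    intro δ hδ
    refine ⟨min (2 * δ / ρ) (Real.sqrt (eb ^ 2 - ε ^ 2)),
      lt_min (by positivity) (Real.sqrt_pos.2 hεeb2'), ?_⟩
    intro u' hu'
    rw [sub_zero] at hu'
    simp only [sub_zero]
    have hnu' : ‖((u' : EuclideanSpace ℝ (Fin n)))‖ = ‖u'‖ := Submodule.norm_coe _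
    have h1 : ‖u'‖ ≤ 2 * δ / ρ := (lt_of_lt_of_le hu' (min_le_left _ _)).le
    have h2 : ‖(u' : EuclideanSpace ℝ (Fin n))‖ ^ 2 + ε ^ 2 ≤ eb ^ 2 := by
      have ha1 := lt_of_lt_of_le hu' (min_le_right _ _)
      have ha2 := (Real.lt_sqrt (norm_nonneg u')).1 ha1
      rw [hnu']; nlinarith
    refine le_trans (EReal.coe_le_coe_iff.2 ?_) (hLB_L u' h2)
    have hip : ⟪gb, ((u' : EuclideanSpace ℝ (Fin n)))⟫
        = ⟪((Submodule.orthogonalProjectionOnto (Vᗮ) gb : ↥(Vᗮ)) : EuclideanSpace ℝ (Fin n)),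
            ((u' : EuclideanSpace ℝ (Fin n)))⟫ := myInnerProj gb u'.2
    have hips : ⟪Submodule.orthogonalProjectionOnto (Vᗮ) gb, u'⟫
        = ⟪((Submodule.orthogonalProjectionOnto (Vᗮ) gb : ↥(Vᗮ)) : EuclideanSpace ℝ (Fin n)),
            ((u' : EuclideanSpace ℝ (Fin n)))⟫ := Submodule.coe_inner _ _ _
    rw [hips, ← hip, hnu']
    have hx1 : ρ * ‖u'‖ ≤ 2 * δ := by
      rw [le_div_iff₀ hρ] at h1; linarith
    have h3 : ρ / 2 * ‖u'‖ ^ 2 ≤ δ * ‖u'‖ := by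
      nlinarith [mul_le_mul_of_nonneg_left hx1 (norm_nonneg u'), norm_nonneg u']
    linarith
  refine Set.eq_singleton_iff_unique_mem.2 ⟨hgbu_mem, ?_⟩
  rintro g ⟨us, gs, hus, hval, hfs, hgs⟩
  choose b hb hineq using hfs
  rw [hL0] at hval
  have hbtend : Tendsto b atTop (𝓝 a) := by
    have he : (fun k => ULagrangian f xb gb V ε (us k)) = fun k => ((b k : ℝ) : EReal) :=
      funext fun k => hb k
    rw [he] at hval
    exact EReal.tendsto_coe.1 hval
  have husE : Tendsto (fun k => ((us k : EuclideanSpace ℝ (Fin n)))) atTop (𝓝 0) := by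
    have hcont := (continuous_subtype_val (p := fun x => x ∈ Vᗮ)).tendsto (0 : ↥(Vᗮ))
    have h := hcont.comp hus
    simpa [Function.comp_def] using h
  have hKcomp : IsCompact {v : EuclideanSpace ℝ (Fin n) | v ∈ V ∧ ‖v‖ ≤ ε} := by
    have hKset : {v : EuclideanSpace ℝ (Fin n) | v ∈ V ∧ ‖v‖ ≤ ε}
        = (V : Set (EuclideanSpace ℝ (Fin n))) ∩ Metric.closedBall 0 ε := by
      ext v; simp [Metric.mem_closedBall, dist_zero_right]
    rw [hKset]
    exact Metric.isCompact_of_isClosed_isBounded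
      ((Submodule.closed_of_finiteDimensional V).inter Metric.isClosed_closedBall)
      (Metric.isBounded_closedBall.subset Set.inter_subset_right)
  have hKne : {v : EuclideanSpace ℝ (Fin n) | v ∈ V ∧ ‖v‖ ≤ ε}.Nonempty :=
    ⟨0, zero_mem V, by simp [hε.le]⟩
  have hmin : ∀ k, ∃ v, (v ∈ V ∧ ‖v‖ ≤ ε) ∧
      f (xb + ↑(us k) + v) - ((⟪projV V gb, v⟫ : ℝ) : EReal) = ULagrangian f xb gb V ε (us k) := by
    intro k
    have hlsc' : LowerSemicontinuous fun v : EuclideanSpace ℝ (Fin n) => f (xb + ↑(us k) + v) := by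
      intro v y hy
      exact ((continuous_const.add continuous_id).tendsto v).eventually (hlsc _ y hy)
    have hψc : Continuous fun v : EuclideanSpace ℝ (Fin n) => ⟪projV V gb, v⟫ :=
      continuous_const.inner continuous_id
    obtain ⟨v, hvK, hveq⟩ := myExistsMin _ hlsc' _ hψc hKcomp hKne
    exact ⟨v, hvK, hveq⟩
  choose w hwK hweq using hmin
  have hwV : ∀ k, w k ∈ V := fun k => (hwK k).1
  have hwnε : ∀ k, ‖w k‖ ≤ ε := fun k => (hwK k).2
  have hfw : ∀ k, f (xb + ↑(us k) + w k) = ((b k + ⟪projV V gb, w k⟫ : ℝ) : EReal) :=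
    fun k => myErealSubEq ((hweq k).trans (hb k))
  have husn : Tendsto (fun k => ‖((us k : EuclideanSpace ℝ (Fin n)))‖) atTop (𝓝 0) := by
    simpa using husE.norm
  have husmall : ∀ᶠ k in atTop, ‖((us k : EuclideanSpace ℝ (Fin n)))‖ ^ 2 + ε ^ 2 ≤ eb ^ 2 := by
    filter_upwards [husn.eventually_lt_const (Real.sqrt_pos.2 hεeb2')] with k hk
    have h := (Real.lt_sqrt (norm_nonneg _)).1 hk
    nlinarith
  have hipt : Tendsto (fun k => ⟪gb, ((us k : EuclideanSpace ℝ (Fin n)))⟫) atTop (𝓝 0) := by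
    have hcont : Continuous fun v : EuclideanSpace ℝ (Fin n) => ⟪gb, v⟫ :=
      continuous_const.inner continuous_id
    have h := (hcont.tendsto 0).comp husE
    simpa [Function.comp_def] using h
  have hwnt : Tendsto (fun k => ‖w k‖) atTop (𝓝 0) := by
    have hGt : Tendsto (fun k => (b k - a - ⟪gb, ((us k : EuclideanSpace ℝ (Fin n)))⟫
        + ρ / 2 * ‖((us k : EuclideanSpace ℝ (Fin n)))‖ ^ 2) / c) atTop (𝓝 0) := by
      have h1 : Tendsto (fun k => b k - a - ⟪gb, ((us k : EuclideanSpace ℝ (Fin n)))⟫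
          + ρ / 2 * ‖((us k : EuclideanSpace ℝ (Fin n)))‖ ^ 2) atTop
          (𝓝 (a - a - 0 + ρ / 2 * 0 ^ 2)) :=
        ((hbtend.sub (tendsto_const_nhds (x := a))).sub hipt).add
          ((tendsto_const_nhds (x := ρ / 2)).mul (husn.pow 2))
      have h2 := h1.div_const c
      simpa using h2
    apply squeeze_zero' (Eventually.of_forall fun k => norm_nonneg _) _ hGt
    filter_upwards [husmall] with k hk
    have hb0 := hLBφ ((us k : EuclideanSpace ℝ (Fin n))) (w k) (us k).2 (hwV k) (hwnε k) hk
    rw [hweq k, hb k] at hb0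
    have hre := EReal.coe_le_coe_iff.1 hb0
    rw [le_div_iff₀ hc, mul_comm]
    linarith
  obtain ⟨N, hN⟩ := eventually_atTop.1 ((hwnt.eventually_lt_const hε).and husmall)
  set X : ℕ → EuclideanSpace ℝ (Fin n) := fun k => xb + ↑(us (k + N)) + w (k + N) with hX_def
  set Ξ : ℕ → EuclideanSpace ℝ (Fin n) := fun k => ↑(gs (k + N)) + projV V gb with hΞ_def
  have hwsh : Tendsto (fun k => w (k + N)) atTop (𝓝 0) := by
    rw [tendsto_zero_iff_norm_tendsto_zero]
    exact hwnt.comp (tendsto_add_atTop_nat N)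
  have hXf : ∀ k, Ξ k ∈ frechetSubdiff f (X k) := by
    intro k
    have hmN : N ≤ k + N := Nat.le_add_left N k
    obtain ⟨hwm, hsm⟩ := hN (k + N) hmN
    refine ⟨b (k + N) + ⟪projV V gb, w (k + N)⟫, hfw (k + N), ?_⟩
    intro δ hδ
    obtain ⟨r, hr, hF⟩ := hineq (k + N) δ hδ
    refine ⟨min r (ε - ‖w (k + N)‖), lt_min hr (by linarith), ?_⟩
    intro x' hx'
    set z : EuclideanSpace ℝ (Fin n) := x' - xb with hz
    set p : ↥(Vᗮ) := Submodule.orthogonalProjectionOnto (Vᗮ) z with hp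
    set qv : EuclideanSpace ℝ (Fin n) := ↑(Submodule.orthogonalProjectionOnto V z) with hq
    have hsum : qv + ((p : EuclideanSpace ℝ (Fin n))) = z :=
      Submodule.starProjection_add_starProjection_orthogonal (K := V) z
    have hdecomp : x' = xb + ↑p + qv := by
      rw [show xb + (p : EuclideanSpace ℝ (Fin n)) + qv
        = xb + (qv + (p : EuclideanSpace ℝ (Fin n))) from by abel, hsum, hz]
      abel
    have hXm : X k = xb + ↑(us (k + N)) + w (k + N) := rfl
    have hPXu : ((Submodule.orthogonalProjectionOnto (Vᗮ) (↑(us (k + N)) + w (k + N)) : ↥(Vᗮ))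
        : EuclideanSpace ℝ (Fin n)) = ↑(us (k + N)) :=
      Submodule.eq_starProjection_of_mem_orthogonal' (K := Vᗮ) (us (k + N)).2
        (V.le_orthogonal_orthogonal (hwV (k + N))) rfl
    have hPXv : ((Submodule.orthogonalProjectionOnto V (↑(us (k + N)) + w (k + N)) : ↥V)
        : EuclideanSpace ℝ (Fin n)) = w (k + N) :=
      Submodule.eq_starProjection_of_mem_orthogonal' (K := V) (hwV (k + N)) (us (k + N)).2 (by abel)
    have hzz : x' - X k = z - (↑(us (k + N)) + w (k + N)) := by
      rw [hz, hXm]; abel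
    have hpu : ((Submodule.orthogonalProjectionOnto (Vᗮ) (x' - X k) : ↥(Vᗮ)) : EuclideanSpace ℝ (Fin n))
        = ↑p - ↑(us (k + N)) := by
      rw [hzz, map_sub, AddSubgroupClass.coe_sub, hPXu, hp]
    have hqw : ((Submodule.orthogonalProjectionOnto V (x' - X k) : ↥V) : EuclideanSpace ℝ (Fin n))
        = qv - w (k + N) := by
      rw [hzz, map_sub, AddSubgroupClass.coe_sub, hPXv, hq]
    have hnp : ‖((p : EuclideanSpace ℝ (Fin n))) - ↑(us (k + N))‖ ≤ ‖x' - X k‖ := by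
      rw [← hpu]; exact myProjNormLe _ _
    have hnq : ‖qv - w (k + N)‖ ≤ ‖x' - X k‖ := by
      rw [← hqw]; exact myProjNormLe _ _
    have hqε : ‖qv‖ ≤ ε := by
      have hq1 : ‖qv‖ ≤ ‖w (k + N)‖ + ‖qv - w (k + N)‖ := by
        calc ‖qv‖ = ‖w (k + N) + (qv - w (k + N))‖ := by rw [show w (k + N) + (qv - w (k + N)) = qv from by abel]
        _ ≤ _ := norm_add_le _ _
      have hq2 : ‖qv - w (k + N)‖ < ε - ‖w (k + N)‖ :=
        lt_of_le_of_lt hnq (lt_of_lt_of_le hx' (min_le_right _ _))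
      linarith
    have hqV : qv ∈ V := Submodule.coe_mem _
    have hmemS : f (xb + ↑p + qv) - ((⟪projV V gb, qv⟫ : ℝ) : EReal)
        ∈ (fun v => f (xb + ↑p + v) - ((⟪projV V gb, v⟫ : ℝ) : EReal)) ''
          {v : EuclideanSpace ℝ (Fin n) | v ∈ V ∧ ‖v‖ ≤ ε} := ⟨qv, ⟨hqV, hqε⟩, rfl⟩
    have hLp : ULagrangian f xb gb V ε p ≤ f x' - ((⟪projV V gb, qv⟫ : ℝ) : EReal) := by
      rw [hdecomp]
      exact sInf_le hmemS
    have hpnorm : ‖p - us (k + N)‖ < r := by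
      have he1 : ‖p - us (k + N)‖ = ‖((p : EuclideanSpace ℝ (Fin n))) - ↑(us (k + N))‖ := by
        rw [← Submodule.norm_coe (p - us (k + N)), AddSubgroupClass.coe_sub]
      rw [he1]
      exact lt_of_le_of_lt hnp (lt_of_lt_of_le hx' (min_le_left _ _))
    have hfr := hF p hpnorm
    have hfr2 : ((b (k + N) + ⟪gs (k + N), p - us (k + N)⟫ - δ * ‖p - us (k + N)‖
        + ⟪projV V gb, qv⟫ : ℝ) : EReal) ≤ f x' :=
      myErealSubLe (le_trans hfr hLp)
    refine le_trans (EReal.coe_le_coe_iff.2 ?_) hfr2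
    have hsplit : x' - X k = (((p : EuclideanSpace ℝ (Fin n))) - ↑(us (k + N)))
        + (qv - w (k + N)) := by
      rw [hdecomp, hXm]; abel
    have hi1 : ⟪((gs (k + N) : ↥(Vᗮ)) : EuclideanSpace ℝ (Fin n)), qv - w (k + N)⟫ = 0 :=
      myInnerOrth (gs (k + N)).2 (V.sub_mem hqV (hwV (k + N)))
    have hi2 : ⟪projV V gb, ((p : EuclideanSpace ℝ (Fin n))) - ↑(us (k + N))⟫ = 0 := by
      rw [real_inner_comm]
      exact myInnerOrth ((Vᗮ).sub_mem p.2 (us (k + N)).2) (Submodule.coe_mem _)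
    have hi3 : ⟪gs (k + N), p - us (k + N)⟫
        = ⟪((gs (k + N) : ↥(Vᗮ)) : EuclideanSpace ℝ (Fin n)),
            ((p : EuclideanSpace ℝ (Fin n))) - ↑(us (k + N))⟫ := by
      rw [Submodule.coe_inner, AddSubgroupClass.coe_sub]
    have hIP : ⟪Ξ k, x' - X k⟫ = ⟪gs (k + N), p - us (k + N)⟫ + ⟪projV V gb, qv⟫
        - ⟪projV V gb, w (k + N)⟫ := by
      rw [hΞ_def, hsplit, inner_add_left, inner_add_right, inner_add_right, hi1, hi2, hi3,
        inner_sub_right, inner_sub_right]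
      ring
    rw [hIP]
    have hpx : ‖p - us (k + N)‖ ≤ ‖x' - X k‖ := by
      rw [show ‖p - us (k + N)‖ = ‖((p : EuclideanSpace ℝ (Fin n))) - ↑(us (k + N))‖ from by
        rw [← Submodule.norm_coe (p - us (k + N)), AddSubgroupClass.coe_sub]]
      exact hnp
    nlinarith [mul_le_mul_of_nonneg_left hpx hδ.le]
  have hXt : Tendsto X atTop (𝓝 xb) := by
    have h1 : Tendsto (fun k => ((us (k + N) : EuclideanSpace ℝ (Fin n)))) atTop (𝓝 0) :=
      husE.comp (tendsto_add_atTop_nat N)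
    have h2 := ((tendsto_const_nhds (x := xb) (f := atTop (α := ℕ))).add h1).add hwsh
    simpa using h2
  have hfXt : Tendsto (fun k => f (X k)) atTop (𝓝 (f xb)) := by
    rw [hfa]
    have he : (fun k => f (X k))
        = fun k => (((b (k + N) + ⟪projV V gb, w (k + N)⟫ : ℝ)) : EReal) :=
      funext fun k => hfw (k + N)
    rw [he, EReal.tendsto_coe]
    have h1 : Tendsto (fun k => b (k + N)) atTop (𝓝 a) := hbtend.comp (tendsto_add_atTop_nat N)
    have h2 : Tendsto (fun k => ⟪projV V gb, w (k + N)⟫) atTop (𝓝 0) := by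
      have hcont : Continuous fun v : EuclideanSpace ℝ (Fin n) => ⟪projV V gb, v⟫ :=
        continuous_const.inner continuous_id
      have h3 := (hcont.tendsto 0).comp hwsh
      simpa [Function.comp_def] using h3
    simpa using h1.add h2
  have hΞt : Tendsto Ξ atTop (𝓝 (↑g + projV V gb)) := by
    have h1 : Tendsto (fun k => ((gs (k + N) : ↥(Vᗮ)) : EuclideanSpace ℝ (Fin n))) atTop
        (𝓝 ((g : EuclideanSpace ℝ (Fin n)))) := by
      have hc2 := (continuous_subtype_val (p := fun x => x ∈ Vᗮ)).tendsto g
      exact hc2.comp (hgs.comp (tendsto_add_atTop_nat N))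
    exact h1.add tendsto_const_nhds
  have hmemf : ((g : EuclideanSpace ℝ (Fin n))) + projV V gb ∈ limSubdiff f xb :=
    ⟨X, Ξ, hXt, hfXt, hXf, hΞt⟩
  have hspan : ∀ y ∈ limSubdiff f xb, y - gt ∈ V := by
    intro y hy
    rw [hV]; exact Submodule.subset_span ⟨y, hy, rfl⟩
  have h1 : (((g : EuclideanSpace ℝ (Fin n))) + projV V gb) - gt ∈ V := hspan _ hmemf
  have h2 : gb - gt ∈ V := hspan gb hgbmem
  have h3 : (((g : EuclideanSpace ℝ (Fin n))) + projV V gb) - gb ∈ V := by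
    have h := V.sub_mem h1 h2
    rwa [show ((((g : EuclideanSpace ℝ (Fin n))) + projV V gb) - gt) - (gb - gt)
      = (((g : EuclideanSpace ℝ (Fin n))) + projV V gb) - gb from by abel] at h
  have h4 : (((g : EuclideanSpace ℝ (Fin n))) + projV V gb) - gb
      = ((g : EuclideanSpace ℝ (Fin n)))
        - ((Submodule.orthogonalProjectionOnto (Vᗮ) gb : ↥(Vᗮ)) : EuclideanSpace ℝ (Fin n)) := by
    rw [← Submodule.starProjection_apply, Submodule.starProjection_orthogonal_val]
    show _ = ((g : EuclideanSpace ℝ (Fin n)))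
      - (gb - ((Submodule.orthogonalProjectionOnto V gb : ↥V) : EuclideanSpace ℝ (Fin n)))
    rw [show projV V gb = ((Submodule.orthogonalProjectionOnto V gb : ↥V) : EuclideanSpace ℝ (Fin n)) from rfl]
    abel
  rw [h4] at h3
  have h5 : ((g : EuclideanSpace ℝ (Fin n)))
      - ((Submodule.orthogonalProjectionOnto (Vᗮ) gb : ↥(Vᗮ)) : EuclideanSpace ℝ (Fin n)) ∈ Vᗮ :=
    Submodule.sub_mem _ g.2 (Submodule.coe_mem _)
  have h6 : ((g : EuclideanSpace ℝ (Fin n)))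
      - ((Submodule.orthogonalProjectionOnto (Vᗮ) gb : ↥(Vᗮ)) : EuclideanSpace ℝ (Fin n)) = 0 :=
    inner_self_eq_zero.1 (myInnerOrth h5 h3)
  exact Subtype.coe_injective (sub_eq_zero.1 h6)
end
end
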